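/- Let a_1, ..., a_n be positive integers with n = 3m for an integer m ≥ 1, let β = (a_1 + ... + a_n)/m (assumed to be an integer), and assume a_i > 2 and β/4 < a_i < β/2 for all i. Let D be the digraph whose vertex set is the disjoint union of sets V_1, ..., V_n with |V_i| = a_i and a set Z with |Z| = β, whose arc set consists of: both arcs (u,v) and (v,u) for every two distinct vertices u, v in the same V_i; both arcs (u,v) and (v,u) for every two distinct vertices u, v of Z; and a loop at every vertex. Then cn(D, m+1) = β if and only if there exists a partition of {1, ..., n} into m triples such that the sum of the a_i over each triple equals β. -/

import Mathlib

open scoped Classical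

/-- The out-neighborhood of a set `S` in the digraph with arc relation `A`. -/
noncomputable def Nplus {V : Type} [Fintype V] (A : V → V → Prop) (S : Finset V) : Finset V :=
  Finset.univ.filter (fun y => ∃ x ∈ S, A x y)

/-- The robber territories associated with a cop strategy `W` (0-indexed:
`terr A W i` is the paper's `R_{i+1}`). -/
noncomputable def terr {V : Type} [Fintype V] [DecidableEq V]
    (A : V → V → Prop) (W : ℕ → Finset V) : ℕ → Finset V
  | 0 => Finset.univ \ W 0
  | i + 1 => Nplus A (terr A W i) \ W (i + 1)

/-- A cop strategy uses at most `k` cops. -/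
def UsesAtMost {V : Type} (W : ℕ → Finset V) (k : ℕ) : Prop :=
  ∀ i, (W i).card ≤ k

/-- `cn(D, l)`: the least `k` admitting a strategy using `k` cops that captures the
robber no later than (1-indexed) time step `l`, i.e. `terr` is empty at some
0-indexed time `t < l`. -/
noncomputable def copNumberBy {V : Type} [Fintype V] [DecidableEq V]
    (A : V → V → Prop) (l : ℕ) : ℕ :=
  sInf {k | ∃ W : ℕ → Finset V, UsesAtMost W k ∧ ∃ t < l, terr A W t = ∅}

/-- The digraph of the 3-partition reduction for bounded capture time.  Vertices:
the disjoint union of the cliques `V_i` (of size `a i`, `i : Fin (3*m)`) and of a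
clique `Z` of size `β`.  Arcs: both directions between distinct vertices inside
each `V_i`; both directions between distinct vertices of `Z`; and a loop at every
vertex. -/
def threePartitionTimedDigraph (m : ℕ) (a : Fin (3 * m) → ℕ) (β : ℕ) :
    ((Σ i : Fin (3 * m), Fin (a i)) ⊕ Fin β) →
    ((Σ i : Fin (3 * m), Fin (a i)) ⊕ Fin β) → Prop
  | Sum.inl u, Sum.inl w => u.1 = w.1
  | Sum.inr _, Sum.inr _ => True
  | _, _ => False

/-! ### Auxiliary development -/

noncomputable def compL (m : ℕ) (a : Fin (3 * m) → ℕ) (β : ℕ) (i : Fin (3 * m)) :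
    Finset ((Σ i : Fin (3 * m), Fin (a i)) ⊕ Fin β) :=
  Finset.univ.map ⟨fun x => Sum.inl ⟨i, x⟩, fun x y h => by simpa using h⟩

noncomputable def compZ (m : ℕ) (a : Fin (3 * m) → ℕ) (β : ℕ) :
    Finset ((Σ i : Fin (3 * m), Fin (a i)) ⊕ Fin β) :=
  Finset.univ.map ⟨Sum.inr, Sum.inr_injective⟩

lemma mem_compL {m : ℕ} {a : Fin (3 * m) → ℕ} {β : ℕ} {i : Fin (3 * m)}
    {v : (Σ i : Fin (3 * m), Fin (a i)) ⊕ Fin β} :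
    v ∈ compL m a β i ↔ ∃ x, v = Sum.inl ⟨i, x⟩ := by
  simp [compL, eq_comm]
  exact Iff.rfl

lemma mem_compZ {m : ℕ} {a : Fin (3 * m) → ℕ} {β : ℕ}
    {v : (Σ i : Fin (3 * m), Fin (a i)) ⊕ Fin β} :
    v ∈ compZ m a β ↔ ∃ z, v = Sum.inr z := by
  simp [compZ, eq_comm]

lemma card_compL {m : ℕ} {a : Fin (3 * m) → ℕ} {β : ℕ} (i : Fin (3 * m)) :
    (compL m a β i).card = a i := by
  simp [compL]

lemma card_compZ {m : ℕ} {a : Fin (3 * m) → ℕ} {β : ℕ} :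
    (compZ m a β).card = β := by
  simp [compZ]

lemma disj_compL {m : ℕ} {a : Fin (3 * m) → ℕ} {β : ℕ} {i i' : Fin (3 * m)} (h : i ≠ i') :
    Disjoint (compL m a β i) (compL m a β i') := by
  rw [Finset.disjoint_left]
  intro v hv hv'
  rw [mem_compL] at hv hv'
  obtain ⟨x, rfl⟩ := hv
  obtain ⟨y, he⟩ := hv'
  simp only [Sum.inl.injEq] at he
  exact h (congrArg Sigma.fst he)

lemma disj_compLZ {m : ℕ} {a : Fin (3 * m) → ℕ} {β : ℕ} (i : Fin (3 * m)) :
    Disjoint (compL m a β i) (compZ m a β) := by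
  rw [Finset.disjoint_left]
  intro v hv hv'
  rw [mem_compL] at hv
  rw [mem_compZ] at hv'
  obtain ⟨x, rfl⟩ := hv
  obtain ⟨y, he⟩ := hv'
  exact absurd he (by simp)

lemma clique_survivor {V : Type} [Fintype V] [DecidableEq V] (A : V → V → Prop)
    (W : ℕ → Finset V) (C : Finset V) (_hne : C.Nonempty)
    (hcl : ∀ u ∈ C, ∀ v ∈ C, A u v)
    (hclosed : ∀ u v, A u v → v ∈ C → u ∈ C) :
    ∀ t, ((∃ v ∈ C, v ∈ terr A W t) ↔ ∀ j ≤ t, ¬ C ⊆ W j) := by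
  intro t
  induction t with
  | zero =>
    constructor
    · rintro ⟨v, hvC, hv⟩ j hj hsub
      interval_cases j
      simp only [terr, Finset.mem_sdiff] at hv
      exact hv.2 (hsub hvC)
    · intro h
      obtain ⟨v, hvC, hv⟩ := Finset.not_subset.mp (h 0 le_rfl)
      exact ⟨v, hvC, by simp [terr, hv]⟩
  | succ t ih =>
    constructor
    · rintro ⟨v, hvC, hv⟩ j hj
      simp only [terr, Finset.mem_sdiff] at hv
      obtain ⟨hvN, hvW⟩ := hv
      simp only [Nplus, Finset.mem_filter] at hvN
      obtain ⟨-, u, hu, hAuv⟩ := hvN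
      have huC := hclosed u v hAuv hvC
      rcases Nat.lt_or_ge j (t + 1) with hj' | hj'
      · exact (ih.mp ⟨u, huC, hu⟩) j (by omega)
      · have hje : j = t + 1 := by omega
        subst hje
        intro hsub; exact hvW (hsub hvC)
    · intro h
      obtain ⟨u, huC, hu⟩ := ih.mpr (fun j hj => h j (by omega))
      obtain ⟨v, hvC, hvW⟩ := Finset.not_subset.mp (h (t + 1) le_rfl)
      refine ⟨v, hvC, ?_⟩
      simp only [terr, Finset.mem_sdiff, Nplus, Finset.mem_filter]
      exact ⟨⟨Finset.mem_univ v, u, hu, hcl u huC v hvC⟩, hvW⟩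

lemma survL {m : ℕ} {a : Fin (3 * m) → ℕ} {β : ℕ} (hapos : ∀ i, 0 < a i)
    (W : ℕ → Finset ((Σ i : Fin (3 * m), Fin (a i)) ⊕ Fin β)) (i : Fin (3 * m)) (t : ℕ) :
    (∃ v ∈ compL m a β i, v ∈ terr (threePartitionTimedDigraph m a β) W t) ↔
      ∀ j ≤ t, ¬ compL m a β i ⊆ W j := by
  apply clique_survivor
  · exact ⟨Sum.inl ⟨i, ⟨0, hapos i⟩⟩, mem_compL.mpr ⟨_, rfl⟩⟩
  · intro u hu v hv
    rw [mem_compL] at hu hv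
    obtain ⟨x, rfl⟩ := hu
    obtain ⟨y, rfl⟩ := hv
    simp [threePartitionTimedDigraph]
  · intro u v hA hv
    rw [mem_compL] at hv ⊢
    obtain ⟨y, rfl⟩ := hv
    rcases u with ⟨i', x⟩ | z
    · simp only [threePartitionTimedDigraph] at hA
      subst hA
      exact ⟨x, rfl⟩
    · simp [threePartitionTimedDigraph] at hA

lemma survZ {m : ℕ} {a : Fin (3 * m) → ℕ} {β : ℕ} (hβpos : 0 < β)
    (W : ℕ → Finset ((Σ i : Fin (3 * m), Fin (a i)) ⊕ Fin β)) (t : ℕ) :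
    (∃ v ∈ compZ m a β, v ∈ terr (threePartitionTimedDigraph m a β) W t) ↔
      ∀ j ≤ t, ¬ compZ m a β ⊆ W j := by
  apply clique_survivor
  · exact ⟨Sum.inr ⟨0, hβpos⟩, mem_compZ.mpr ⟨_, rfl⟩⟩
  · intro u hu v hv
    rw [mem_compZ] at hu hv
    obtain ⟨x, rfl⟩ := hu
    obtain ⟨y, rfl⟩ := hv
    simp [threePartitionTimedDigraph]
  · intro u v hA hv
    rw [mem_compZ] at hv ⊢
    obtain ⟨y, rfl⟩ := hv
    rcases u with ⟨i', x⟩ | z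
    · simp [threePartitionTimedDigraph] at hA
    · exact ⟨z, rfl⟩

lemma terr_empty_iff {m : ℕ} {a : Fin (3 * m) → ℕ} {β : ℕ}
    (hapos : ∀ i, 0 < a i) (hβpos : 0 < β)
    (W : ℕ → Finset ((Σ i : Fin (3 * m), Fin (a i)) ⊕ Fin β)) (t : ℕ) :
    terr (threePartitionTimedDigraph m a β) W t = ∅ ↔
      (∀ i, ∃ j ≤ t, compL m a β i ⊆ W j) ∧ (∃ j ≤ t, compZ m a β ⊆ W j) := by
  constructor
  · intro h
    constructor
    · intro i
      by_contra hc
      push_neg at hc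
      obtain ⟨v, -, hv⟩ := (survL hapos W i t).mpr hc
      simp [h] at hv
    · by_contra hc
      push_neg at hc
      obtain ⟨v, -, hv⟩ := (survZ hβpos W t).mpr hc
      simp [h] at hv
  · rintro ⟨hL, hZ⟩
    rw [Finset.eq_empty_iff_forall_notMem]
    intro v hv
    rcases v with ⟨i, x⟩ | z
    · obtain ⟨j, hj, hsub⟩ := hL i
      exact (survL hapos W i t).mp ⟨Sum.inl ⟨i, x⟩, mem_compL.mpr ⟨x, rfl⟩, hv⟩ j hj hsub
    · obtain ⟨j, hj, hsub⟩ := hZ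
      exact (survZ hβpos W t).mp ⟨Sum.inr z, mem_compZ.mpr ⟨z, rfl⟩, hv⟩ j hj hsub

/-- `cn(D, m+1) = β` iff the 3-partition instance is a yes-instance. -/
theorem copNumberBy_threePartitionTimedDigraph (m : ℕ) (hm : 1 ≤ m)
    (a : Fin (3 * m) → ℕ) (β : ℕ)
    (hβ : m * β = ∑ i, a i)
    (ha : ∀ i, 2 < a i)
    (halow : ∀ i, β < 4 * a i) (haup : ∀ i, 2 * a i < β) :
    copNumberBy (threePartitionTimedDigraph m a β) (m + 1) = β ↔
      ∃ f : Fin (3 * m) → Fin m,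
        (∀ j, (Finset.univ.filter (fun i => f i = j)).card = 3) ∧
        (∀ j, ∑ i ∈ Finset.univ.filter (fun i => f i = j), a i = β) := by
  have h3m : 0 < 3 * m := by omega
  have hapos : ∀ i, 0 < a i := fun i => by have := ha i; omega
  have hβpos : 0 < β := by
    have h1 := haup ⟨0, h3m⟩; have h2 := ha ⟨0, h3m⟩; omega
  set A := threePartitionTimedDigraph m a β with hAdef
  set S : Set ℕ :=
    {k | ∃ W : ℕ → Finset ((Σ i : Fin (3 * m), Fin (a i)) ⊕ Fin β),
      UsesAtMost W k ∧ ∃ t < m + 1, terr A W t = ∅} with hS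
  have hSne : S.Nonempty := by
    refine ⟨Fintype.card ((Σ i : Fin (3 * m), Fin (a i)) ⊕ Fin β),
      fun _ => Finset.univ, fun i => le_of_eq Finset.card_univ, 0, by omega, ?_⟩
    simp [terr]
  have hlb : ∀ k ∈ S, β ≤ k := by
    rintro k ⟨W, hW, t, ht, hterr⟩
    obtain ⟨-, j, -, hsub⟩ := (terr_empty_iff hapos hβpos W t).mp hterr
    calc β = (compZ m a β).card := card_compZ.symm
      _ ≤ (W j).card := Finset.card_le_card hsub
      _ ≤ k := hW j
  have hmem : β ∈ S ↔
      ∃ f : Fin (3 * m) → Fin m,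
        (∀ j, (Finset.univ.filter (fun i => f i = j)).card = 3) ∧
        (∀ j, ∑ i ∈ Finset.univ.filter (fun i => f i = j), a i = β) := by
    constructor
    · rintro ⟨W, hW, t, ht, hterr⟩
      obtain ⟨hL, j0, hj0, hZ⟩ := (terr_empty_iff hapos hβpos W t).mp hterr
      choose g hg1 hg2 using hL
      have hj0m : j0 ≤ m := by omega
      have hgm : ∀ i, g i ≤ m := fun i => by have := hg1 i; omega
      set T : ℕ → Finset (Fin (3 * m)) :=
        fun j => Finset.univ.filter (fun i => g i = j) with hT
      -- each step carries at most β cops, hence covers components of total ≤ β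
      have hkey : ∀ j, (if j = j0 then β else 0) + ∑ i ∈ T j, a i ≤ β := by
        intro j
        have hbU : (T j).biUnion (compL m a β) ⊆ W j := by
          intro v hv
          simp only [Finset.mem_biUnion] at hv
          obtain ⟨i, hi, hvi⟩ := hv
          have hgi : g i = j := (Finset.mem_filter.mp hi).2
          rw [← hgi]
          exact hg2 i hvi
        have hcardU : ((T j).biUnion (compL m a β)).card = ∑ i ∈ T j, a i := by
          rw [Finset.card_biUnion (fun x _ y _ hxy => disj_compL hxy)]
          exact Finset.sum_congr rfl (fun i _ => card_compL i)
        by_cases hj : j = j0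
        · have hdisj : Disjoint (compZ m a β) ((T j).biUnion (compL m a β)) := by
            rw [Finset.disjoint_biUnion_right]
            exact fun i _ => (disj_compLZ i).symm
          have hsub : compZ m a β ∪ (T j).biUnion (compL m a β) ⊆ W j := by
            refine Finset.union_subset ?_ hbU
            rw [hj]; exact hZ
          calc (if j = j0 then β else 0) + ∑ i ∈ T j, a i
              = (compZ m a β ∪ (T j).biUnion (compL m a β)).card := by
                rw [Finset.card_union_of_disjoint hdisj, hcardU, card_compZ, if_pos hj]
            _ ≤ (W j).card := Finset.card_le_card hsub
            _ ≤ β := hW j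
        · rw [if_neg hj, zero_add, ← hcardU]
          exact (Finset.card_le_card hbU).trans (hW j)
      have hsum : ∑ j ∈ Finset.range (m + 1),
          ((if j = j0 then β else 0) + ∑ i ∈ T j, a i)
            = ∑ j ∈ Finset.range (m + 1), β := by
        rw [Finset.sum_add_distrib, Finset.sum_ite_eq' (Finset.range (m + 1)) j0 (fun _ => β),
          if_pos (Finset.mem_range.mpr (by omega))]
        have hfib : ∑ j ∈ Finset.range (m + 1), ∑ i ∈ T j, a i = ∑ i, a i := by
          rw [hT]
          exact Finset.sum_fiberwise_of_maps_to
            (fun i _ => Finset.mem_range.mpr (by have := hgm i; omega)) a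
        rw [hfib, Finset.sum_const, Finset.card_range, smul_eq_mul, ← hβ]
        ring
      have heach := (Finset.sum_eq_sum_iff_of_le
        (fun j _ => hkey j)).mp hsum
      have hTj0 : ∀ i, g i ≠ j0 := by
        intro i hgi
        have h1 := heach j0 (Finset.mem_range.mpr (by omega))
        rw [if_pos rfl] at h1
        have h2 : ∑ i ∈ T j0, a i = 0 := by omega
        have h3 : i ∈ T j0 := by simp [hT, hgi]
        have h4 := Finset.sum_eq_zero_iff.mp h2 i h3
        have := hapos i; omega
      have hTsum : ∀ j ≤ m, j ≠ j0 → ∑ i ∈ T j, a i = β := by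
        intro j hjm hj
        have h1 := heach j (Finset.mem_range.mpr (by omega))
        rwa [if_neg hj, zero_add] at h1
      have hgm' : ∀ i, (if g i < j0 then g i else g i - 1) < m := by
        intro i
        have h1 := hgm i; have h2 := hTj0 i
        split_ifs <;> omega
      set f : Fin (3 * m) → Fin m :=
        fun i => ⟨if g i < j0 then g i else g i - 1, hgm' i⟩ with hf
      have hfiber : ∀ j : Fin m, Finset.univ.filter (fun i => f i = j)
          = T (if (j : ℕ) < j0 then (j : ℕ) else (j : ℕ) + 1) := by
        intro j
        ext i
        simp only [hf, hT, Finset.mem_filter, Finset.mem_univ, true_and, Fin.ext_iff]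
        have h1 := hgm i; have h2 := hTj0 i; have h3 := j.isLt
        split_ifs <;> omega
      have hjval : ∀ j : Fin m,
          (if (j : ℕ) < j0 then (j : ℕ) else (j : ℕ) + 1) ≤ m ∧
          (if (j : ℕ) < j0 then (j : ℕ) else (j : ℕ) + 1) ≠ j0 := by
        intro j
        have h3 := j.isLt
        split_ifs <;> omega
      have hcard3 : ∀ T' : Finset (Fin (3 * m)), ∑ i ∈ T', a i = β → T'.card = 3 := by
        intro T' hsum'
        have hne : T'.Nonempty := by
          rcases T'.eq_empty_or_nonempty with rfl | h
          · simp only [Finset.sum_empty] at hsum'; omega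
          · exact h
        have h1 : 2 * β < T'.card * β := by
          calc 2 * β = ∑ i ∈ T', 2 * a i := by rw [← Finset.mul_sum, hsum']
            _ < ∑ _i ∈ T', β := Finset.sum_lt_sum_of_nonempty hne (fun i _ => haup i)
            _ = T'.card * β := by rw [Finset.sum_const, smul_eq_mul]
        have h2 : T'.card * β < 4 * β := by
          calc T'.card * β = ∑ _i ∈ T', β := by rw [Finset.sum_const, smul_eq_mul]
            _ < ∑ i ∈ T', 4 * a i := Finset.sum_lt_sum_of_nonempty hne (fun i _ => halow i)
            _ = 4 * β := by rw [← Finset.mul_sum, hsum']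
        have h3 := Nat.lt_of_mul_lt_mul_right h1
        have h4 := Nat.lt_of_mul_lt_mul_right h2
        omega
      refine ⟨f, fun j => ?_, fun j => ?_⟩
      · rw [hfiber j]
        exact hcard3 _ (hTsum _ (hjval j).1 (hjval j).2)
      · rw [hfiber j]
        exact hTsum _ (hjval j).1 (hjval j).2
    · rintro ⟨f, hf3, hfβ⟩
      refine ⟨fun j => if hj : j < m then
          (Finset.univ.filter (fun i => f i = ⟨j, hj⟩)).biUnion (compL m a β)
        else if j = m then compZ m a β else ∅, ?_, m, by omega, ?_⟩
      · intro j
        beta_reduce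
        by_cases hj : j < m
        · rw [dif_pos hj, Finset.card_biUnion (fun x _ y _ hxy => disj_compL hxy)]
          refine le_of_eq ?_
          rw [← hfβ ⟨j, hj⟩]
          exact Finset.sum_congr rfl (fun i _ => card_compL i)
        · rw [dif_neg hj]
          by_cases hj' : j = m
          · rw [if_pos hj', card_compZ]
          · rw [if_neg hj']
            simp [hβpos.le]
      · rw [hAdef, terr_empty_iff hapos hβpos]
        constructor
        · intro i
          refine ⟨(f i : ℕ), Nat.le_of_lt (f i).isLt, ?_⟩
          beta_reduce
          rw [dif_pos (f i).isLt]
          refine Finset.subset_biUnion_of_mem (compL m a β) ?_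
          simp
        · refine ⟨m, le_rfl, ?_⟩
          beta_reduce
          rw [dif_neg (lt_irrefl m), if_pos rfl]
  rw [copNumberBy, ← hS]
  constructor
  · intro h
    exact hmem.mp (h ▸ Nat.sInf_mem hSne)
  · intro h
    exact le_antisymm (Nat.sInf_le (hmem.mpr h)) (le_csInf hSne hlb)
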